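/- Suppose I contains an unbounded subset of κ. Then: (1) every nonempty A ⊆ ν^κ is the image of all of κ^κ under a map continuous with respect to the I-topologies; (2) every A ⊆ ν^κ is the image of some I-closed subset C ⊆ κ^κ under an injective I-continuous map. In particular, continuous images (even injective continuous images of closed sets) give the full powerset. -/

import Mathlib

open Set Cardinal TopologicalSpace

/-- A κ-complete proper ideal on κ extending the ideal of bounded sets. -/
structure IsGoodIdeal (κ : Type) [LinearOrder κ] (I : Set (Set κ)) : Prop where
  lower : ∀ ⦃A B : Set κ⦄, A ⊆ B → B ∈ I → A ∈ I
  complete : ∀ J : Set (Set κ), J ⊆ I → #J < #κ → ⋃₀ J ∈ I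
  proper : (Set.univ : Set κ) ∉ I
  bounded_mem : ∀ s : Set κ, Set.Bounded (· < ·) s → s ∈ I

/-- The basic cone `N_f` determined by the restriction of `f` to `D`. -/
def cone {κ ν : Type} (D : Set κ) (f : κ → ν) : Set (κ → ν) :=
  {x | ∀ α ∈ D, x α = f α}

/-- The ideal topology `τ_I` on `ν^κ`. -/
def idealTop {κ : Type} (I : Set (Set κ)) (ν : Type) : TopologicalSpace (κ → ν) :=
  TopologicalSpace.generateFrom {S | ∃ D ∈ I, ∃ f : κ → ν, S = cone D f}

/-- The bounded topology `τ_b` on `ν^κ`. -/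
def boundedTop (κ ν : Type) [LinearOrder κ] : TopologicalSpace (κ → ν) :=
  TopologicalSpace.generateFrom
    {S | ∃ D : Set κ, Set.Bounded (· < ·) D ∧ ∃ f : κ → ν, S = cone D f}

lemma isOpen_gen {X : Type} {g : Set (Set X)} {T : Set X}
    (h : ∀ x ∈ T, ∃ S ∈ g, x ∈ S ∧ S ⊆ T) :
    @IsOpen _ (TopologicalSpace.generateFrom g) T := by
  have hT : T = ⋃₀ {S | S ∈ g ∧ S ⊆ T} := by
    ext a
    constructor
    · intro ha
      obtain ⟨S, hSg, haS, hST⟩ := h a ha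
      exact ⟨S, ⟨hSg, hST⟩, haS⟩
    · rintro ⟨S, ⟨-, hST⟩, haS⟩
      exact hST haS
  rw [hT]
  exact TopologicalSpace.GenerateOpen.sUnion _ fun S hS =>
    TopologicalSpace.GenerateOpen.basic S hS.1

lemma cont_of_local {κ ν : Type} (I : Set (Set κ)) (U : Set κ) (hUI : U ∈ I)
    (Φ : (κ → κ) → (κ → ν))
    (hloc : ∀ x y : κ → κ, (∀ α ∈ U, x α = y α) → Φ x = Φ y)
    (t : TopologicalSpace (κ → ν)) :
    @Continuous _ _ (idealTop I κ) t Φ := by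
  refine (@continuous_def _ _ (idealTop I κ) t Φ).mpr fun s _ => ?_
  refine isOpen_gen fun x hx => ⟨cone U x, ⟨U, hUI, x, rfl⟩, fun α _ => rfl, ?_⟩
  intro y hy
  have : Φ y = Φ x := hloc y x hy
  simpa [Set.mem_preimage, this] using hx

/-- if `I` contains an unbounded set, every nonempty `A ⊆ ν^κ` is an
`I`-continuous image of `κ^κ`, and every `A ⊆ ν^κ` is an injective `I`-continuous image
of an `I`-closed subset of `κ^κ`. -/
theorem stmt_17 (κ ν : Type) [LinearOrder κ]
    (hreg : (#κ).IsRegular) (hunc : ℵ₀ < #κ) (hν : #ν = 2 ∨ #ν = #κ)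
    (I : Set (Set κ)) (hI : IsGoodIdeal κ I)
    (hU : ∃ U ∈ I, ¬ Set.Bounded (· < ·) U) :
    (∀ A : Set (κ → ν), A.Nonempty →
      ∃ Φ : (κ → κ) → (κ → ν),
        @Continuous _ _ (idealTop I κ) (idealTop I ν) Φ ∧ Φ '' Set.univ = A) ∧
    (∀ A : Set (κ → ν),
      ∃ (C : Set (κ → κ)) (Φ : (κ → κ) → (κ → ν)),
        @IsClosed _ (idealTop I κ) C ∧
        @Continuous _ _ (idealTop I κ) (idealTop I ν) Φ ∧
        Set.InjOn Φ C ∧ Φ '' C = A) := by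
  classical
  obtain ⟨U, hUI, hUunb⟩ := hU
  have hκne : Nonempty κ :=
    Cardinal.mk_ne_zero_iff.mp (Cardinal.aleph0_pos.trans hunc).ne'
  obtain ⟨c⟩ := hκne
  -- unboundedness, unfolded
  have hcofinal : ∀ a : κ, ∃ u ∈ U, a ≤ u := by
    intro a
    by_contra h
    push_neg at h
    exact hUunb ⟨a, fun b hb => h b hb⟩
  -- union of two sets in I
  have union2 : ∀ {A B : Set κ}, A ∈ I → B ∈ I → A ∪ B ∈ I := by
    intro A B hA hB
    have hfin : ({A, B} : Set (Set κ)).Finite := Set.toFinite _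
    have h2 : #({A, B} : Set (Set κ)) < #κ := lt_trans hfin.lt_aleph0 hunc
    have := hI.complete {A, B} (by rintro S (rfl | rfl) <;> assumption) h2
    simpa [Set.sUnion_pair] using this
  -- no maximum
  have hnomax : ∀ a : κ, ∃ b, a < b := by
    intro a
    by_contra h
    push_neg at h
    have haU : a ∈ U := by
      by_contra haU
      refine hUunb ⟨a, fun b hb => ?_⟩
      exact lt_of_le_of_ne (h b) (fun e => haU (e ▸ hb))
    have h1 : ({a} : Set κ) ∈ I := hI.lower (Set.singleton_subset_iff.mpr haU) hUI
    have h2 : ({a}ᶜ : Set κ) ∈ I := by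
      refine hI.bounded_mem _ ⟨a, fun b hb => ?_⟩
      exact lt_of_le_of_ne (h b) (by simpa using hb)
    have := union2 h1 h2
    simp [Set.union_compl_self] at this
    exact hI.proper this
  have hsingleton : ∀ a : κ, ({a} : Set κ) ∈ I := by
    intro a
    obtain ⟨b, hb⟩ := hnomax a
    exact hI.bounded_mem _ ⟨b, fun x hx => by simpa [Set.mem_singleton_iff.mp hx] using hb⟩
  -- #U = #κ
  have hUκ : #↥U = #κ := by
    refine le_antisymm (Cardinal.mk_set_le U) ?_
    by_contra hlt
    push_neg at hlt
    set J : Set (Set κ) := (fun u : κ => Set.Iic u) '' U with hJ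
    have hJI : J ⊆ I := by
      rintro S ⟨u, -, rfl⟩
      obtain ⟨b, hb⟩ := hnomax u
      exact hI.bounded_mem _ ⟨b, fun x hx => lt_of_le_of_lt hx hb⟩
    have hJcard : #↥J < #κ := lt_of_le_of_lt Cardinal.mk_image_le hlt
    have huniv : ⋃₀ J = Set.univ := by
      ext a
      simp only [Set.mem_univ, iff_true, Set.mem_sUnion]
      obtain ⟨u, hu, hau⟩ := hcofinal a
      exact ⟨Set.Iic u, ⟨u, hu, rfl⟩, hau⟩
    exact hI.proper (huniv ▸ hI.complete J hJI hJcard)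
  -- cardinality: #(U → κ) = #(κ → ν)
  have hcard : #(↥U → κ) = #(κ → ν) := by
    rw [← Cardinal.power_def, ← Cardinal.power_def, hUκ]
    rcases hν with h | h <;> rw [h, Cardinal.power_self_eq hunc.le]
  -- the bijection θ
  obtain ⟨θ⟩ : Nonempty ((↥U → κ) ≃ (κ → ν)) := Cardinal.eq.mp hcard
  constructor
  · -- part 1
    rintro A ⟨a₀, ha₀⟩
    have hAne : Nonempty ↥A := ⟨⟨a₀, ha₀⟩⟩
    have hAle : #↥A ≤ #(↥U → κ) := hcard ▸ Cardinal.mk_set_le A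
    obtain ⟨e⟩ := (Cardinal.le_def _ _).mp hAle
    set g : (↥U → κ) → ↥A := Function.invFun e with hg
    have hgsurj : Function.Surjective g := Function.invFun_surjective e.injective
    refine ⟨fun x => (g (fun u => x u.1)).1, ?_, ?_⟩
    · exact cont_of_local I U hUI _
        (fun x y h => by
          have hres : (fun u : ↥U => x u.1) = fun u : ↥U => y u.1 :=
            funext fun u => h u.1 u.2
          rw [hres]) _
    · ext a
      simp only [Set.image_univ, Set.mem_range]
      constructor
      · rintro ⟨x, rfl⟩
        exact (g fun u => x u.1).2
      · intro ha
        obtain ⟨f, hf⟩ := hgsurj ⟨a, ha⟩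
        refine ⟨fun α => if h : α ∈ U then f ⟨α, h⟩ else c, ?_⟩
        have hres : (fun u : ↥U =>
            (fun α : κ => if h : α ∈ U then f ⟨α, h⟩ else c) u.1) = f := by
          funext u
          simp [u.2]
        simp only [hres, hf]
  · -- part 2
    intro A
    set Φ : (κ → κ) → (κ → ν) := fun x => θ (fun u => x u.1) with hΦ
    have hΦloc : ∀ x y : κ → κ, (∀ α ∈ U, x α = y α) → Φ x = Φ y := by
      intro x y h
      have hres : (fun u : ↥U => x u.1) = fun u : ↥U => y u.1 := funext fun u => h u.1 u.2
      simp only [hΦ, hres]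
    set C : Set (κ → κ) := {x | (∀ α, α ∉ U → x α = c) ∧ Φ x ∈ A} with hC
    refine ⟨C, Φ, ?_, cont_of_local I U hUI _ hΦloc _, ?_, ?_⟩
    · -- closed
      refine @IsClosed.mk _ (idealTop I κ) C (isOpen_gen fun x hx => ?_)
      by_cases hoff : ∀ α, α ∉ U → x α = c
      · have hΦx : Φ x ∉ A := fun h => hx ⟨hoff, h⟩
        refine ⟨cone U x, ⟨U, hUI, x, rfl⟩, fun α _ => rfl, ?_⟩
        intro y hy hyC
        exact hΦx (hΦloc x y (fun α hα => (hy α hα).symm) ▸ hyC.2)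
      · push_neg at hoff
        obtain ⟨α, hαU, hαc⟩ := hoff
        refine ⟨cone {α} x, ⟨{α}, hsingleton α, x, rfl⟩, fun β hβ => by
          simp [Set.mem_singleton_iff.mp hβ], ?_⟩
        intro y hy hyC
        exact hαc ((hy α rfl).symm.trans (hyC.1 α hαU))
    · -- injective
      intro x hx y hy hxy
      funext α
      by_cases hα : α ∈ U
      · have := θ.injective hxy
        exact congrFun this ⟨α, hα⟩
      · rw [hx.1 α hα, hy.1 α hα]
    · -- image
      ext a
      constructor
      · rintro ⟨x, hx, rfl⟩
        exact hx.2
      · intro ha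
        set f := θ.symm a with hf
        have hres : (fun u : ↥U =>
            (fun α : κ => if h : α ∈ U then f ⟨α, h⟩ else c) u.1) = f := by
          funext u
          simp [u.2]
        have hΦval : Φ (fun α => if h : α ∈ U then f ⟨α, h⟩ else c) = a := by
          simp [hΦ, hf]
        exact ⟨fun α => if h : α ∈ U then f ⟨α, h⟩ else c,
          ⟨fun α hα => dif_neg hα, hΦval ▸ ha⟩, hΦval⟩
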